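/- arXiv:1310.1142 — 3 statements merged into one kernel-verified Lean document; each statement's English description precedes it below -/
import Mathlib

section
/- Let V be a right-continuous nondecreasing process with V₀ = 0 all of whose jumps satisfy ΔV ≥ α² whenever ΔV > 0, and suppose V_{t-} ≤ n for all t ≤ τ_n. Then for every t ≤ τ_n, the sum of √(ΔV_s) over s ≤ t is at most (1/β_n) · √(V_t), where β_n = √(1 + n/α²) − √(n/α²). -/
open scoped ENNReal

private lemma key_ineq (a Δ α n : ℝ) (hα : 0 < α) (ha : 0 ≤ a) (han : a ≤ n)
    (hΔ : α ^ 2 ≤ Δ) :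
    (Real.sqrt (1 + n / α ^ 2) - Real.sqrt (n / α ^ 2)) * Real.sqrt Δ ≤
      Real.sqrt (a + Δ) - Real.sqrt a := by
  have hα2 : (0:ℝ) < α ^ 2 := by positivity
  have hn0 : 0 ≤ n := ha.trans han
  have hΔ0 : 0 ≤ Δ := le_trans hα2.le hΔ
  set p := Real.sqrt (1 + n / α ^ 2) with hp
  set q := Real.sqrt (n / α ^ 2) with hq
  set u := Real.sqrt (a + Δ) with hu
  set v := Real.sqrt a with hv
  set w := Real.sqrt Δ with hw
  have hp2 : p ^ 2 = 1 + n / α ^ 2 := Real.sq_sqrt (by positivity)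
  have hq2 : q ^ 2 = n / α ^ 2 := Real.sq_sqrt (by positivity)
  have hu2 : u ^ 2 = a + Δ := Real.sq_sqrt (by positivity)
  have hv2 : v ^ 2 = a := Real.sq_sqrt ha
  have hw2 : w ^ 2 = Δ := Real.sq_sqrt hΔ0
  have hp0 : 0 ≤ p := Real.sqrt_nonneg _
  have hq0 : 0 ≤ q := Real.sqrt_nonneg _
  have hu0 : 0 ≤ u := Real.sqrt_nonneg _
  have hv0 : 0 ≤ v := Real.sqrt_nonneg _
  have hw0 : 0 ≤ w := Real.sqrt_nonneg _
  -- a ≤ n * Δ / α ^ 2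
  have haux : a ≤ n * Δ / α ^ 2 := by
    have : n * α ^ 2 ≤ n * Δ := mul_le_mul_of_nonneg_left hΔ hn0
    rw [le_div_iff₀ hα2]
    nlinarith
  have hupw : u ≤ p * w := by
    have h1 : a + Δ ≤ (1 + n / α ^ 2) * Δ := by
      have : (1 + n / α ^ 2) * Δ = Δ + n * Δ / α ^ 2 := by ring
      linarith
    calc u ≤ Real.sqrt ((1 + n / α ^ 2) * Δ) := Real.sqrt_le_sqrt h1
    _ = p * w := Real.sqrt_mul (by positivity) _
  have hvqw : v ≤ q * w := by
    calc v ≤ Real.sqrt (n / α ^ 2 * Δ) := Real.sqrt_le_sqrt (by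
          rw [div_mul_eq_mul_div]; exact haux)
    _ = q * w := Real.sqrt_mul (by positivity) _
  have hqp : q ≤ p := Real.sqrt_le_sqrt (by linarith)
  have hkey : (u - v) * (u + v) = (p * w - q * w) * (p * w + q * w) := by
    have h : u ^ 2 - v ^ 2 = (p ^ 2 - q ^ 2) * w ^ 2 := by
      rw [hu2, hv2, hw2, hp2, hq2]; ring
    linear_combination h
  have huvpos : 0 < u + v := by nlinarith [hu2, hα2]
  have hsum : u + v ≤ p * w + q * w := by linarith
  have hnn : 0 ≤ p * w - q * w :=
    sub_nonneg.mpr (mul_le_mul_of_nonneg_right hqp hw0)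
  have h4 : (p * w - q * w) * (u + v) ≤ (u - v) * (u + v) := by
    rw [hkey]; exact mul_le_mul_of_nonneg_left hsum hnn
  have h5 : p * w - q * w ≤ u - v := (mul_le_mul_iff_of_pos_right huvpos).mp h4
  rw [sub_mul]
  linarith

private lemma tele (V : ℝ → ℝ) (hmono : Monotone V) (T : Finset ℝ) :
    ∀ B : ℝ, (∀ s ∈ T, V s ≤ B) →
      ∑ s ∈ T, (Real.sqrt (V s) - Real.sqrt (Function.leftLim V s)) ≤ Real.sqrt B := by
  induction T using Finset.strongInduction with
  | _ T ih =>
    intro B hB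
    rcases T.eq_empty_or_nonempty with rfl | hne
    · simpa using Real.sqrt_nonneg B
    · set m := T.max' hne with hm
      have hmT : m ∈ T := T.max'_mem hne
      have h1 : ∀ s ∈ T.erase m, V s ≤ Function.leftLim V m := by
        intro s hs
        have hsm : s < m :=
          lt_of_le_of_ne (T.le_max' s (Finset.mem_of_mem_erase hs))
            (Finset.ne_of_mem_erase hs)
        exact hmono.le_leftLim hsm
      have h2 := ih (T.erase m) (Finset.erase_ssubset hmT) _ h1
      have h3 : Real.sqrt (V m) ≤ Real.sqrt B := Real.sqrt_le_sqrt (hB m hmT)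
      rw [← Finset.sum_erase_add T _ hmT]
      linarith

/-- For a nondecreasing right-continuous process `V` with `V 0 = 0`, whose nonzero jumps
are at least `α²`, and with left limits bounded by `n` up to time `t`, the sum of the
square roots of the jumps up to `t` is at most `(1/βₙ) √(V t)`, where
`βₙ = √(1 + n/α²) − √(n/α²)`. -/
theorem sum_sqrt_jumps_le (V : ℝ → ℝ) (α : ℝ) (n : ℝ) (t : ℝ)
    (hα : 0 < α) (hn : 1 ≤ n)
    (hmono : Monotone V) (hV0 : V 0 = 0)
    (hrc : ∀ s : ℝ, ContinuousWithinAt V (Set.Ici s) s)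
    (hjump : ∀ s : ℝ, 0 < V s - Function.leftLim V s →
      α ^ 2 ≤ V s - Function.leftLim V s)
    (hbound : ∀ s : ℝ, s ≤ t → Function.leftLim V s ≤ n)
    (ht : 0 < t) :
    (∑' s : ℝ, if s ∈ Set.Ioc (0 : ℝ) t then
        ENNReal.ofReal (Real.sqrt (V s - Function.leftLim V s)) else 0) ≤
      ENNReal.ofReal
        ((Real.sqrt (1 + n / α ^ 2) - Real.sqrt (n / α ^ 2))⁻¹ * Real.sqrt (V t)) := by
  set β := Real.sqrt (1 + n / α ^ 2) - Real.sqrt (n / α ^ 2) with hβdef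
  have hα2 : (0:ℝ) < α ^ 2 := by positivity
  have hn0 : (0:ℝ) ≤ n := le_trans zero_le_one hn
  have hβ : 0 < β := by
    have h : Real.sqrt (n / α ^ 2) < Real.sqrt (1 + n / α ^ 2) :=
      Real.sqrt_lt_sqrt (by positivity) (by linarith)
    rw [hβdef]; exact sub_pos.mpr h
  rw [ENNReal.tsum_eq_iSup_sum]
  apply iSup_le
  intro F
  classical
  have hsplit : (∑ s ∈ F, if s ∈ Set.Ioc (0 : ℝ) t then
      ENNReal.ofReal (Real.sqrt (V s - Function.leftLim V s)) else 0) =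
      ∑ s ∈ F.filter (· ∈ Set.Ioc (0:ℝ) t),
        ENNReal.ofReal (Real.sqrt (V s - Function.leftLim V s)) := by
    rw [Finset.sum_filter]
  rw [hsplit, ← ENNReal.ofReal_sum_of_nonneg (fun s _ => Real.sqrt_nonneg _)]
  apply ENNReal.ofReal_le_ofReal
  set F' := F.filter (· ∈ Set.Ioc (0:ℝ) t) with hF'
  have hmem : ∀ s ∈ F', 0 < s ∧ s ≤ t := by
    intro s hs
    have := (Finset.mem_filter.mp hs).2
    exact ⟨this.1, this.2⟩
  have hterm : ∀ s ∈ F', β * Real.sqrt (V s - Function.leftLim V s) ≤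
      Real.sqrt (V s) - Real.sqrt (Function.leftLim V s) := by
    intro s hs
    obtain ⟨hs0, hst⟩ := hmem s hs
    have hll : Function.leftLim V s ≤ V s := hmono.leftLim_le le_rfl
    by_cases h : 0 < V s - Function.leftLim V s
    · have hΔ := hjump s h
      have ha0 : 0 ≤ Function.leftLim V s := by
        have := hmono.le_leftLim hs0
        rwa [hV0] at this
      have han : Function.leftLim V s ≤ n := hbound s hst
      have := key_ineq (Function.leftLim V s) (V s - Function.leftLim V s) α n
        hα ha0 han hΔ
      simpa using this
    · have h0 : Real.sqrt (V s - Function.leftLim V s) = 0 :=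
        Real.sqrt_eq_zero_of_nonpos (by linarith)
      have := Real.sqrt_le_sqrt hll
      rw [h0, mul_zero]
      linarith
  rw [inv_mul_eq_div, le_div_iff₀ hβ]
  calc (∑ s ∈ F', Real.sqrt (V s - Function.leftLim V s)) * β
      = ∑ s ∈ F', β * Real.sqrt (V s - Function.leftLim V s) := by
        rw [Finset.sum_mul]; exact Finset.sum_congr rfl fun s _ => mul_comm _ _
    _ ≤ ∑ s ∈ F', (Real.sqrt (V s) - Real.sqrt (Function.leftLim V s)) :=
        Finset.sum_le_sum hterm
    _ ≤ Real.sqrt (V t) := tele V hmono F' (V t)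
        (fun s hs => hmono (hmem s hs).2)
end

section
/- Let τ be a random time on a filtered probability space and let Z_t = P(τ > t | ℱ_t), Z̃_t = P(τ ≥ t | ℱ_t). For any two equivalent probability measures Q ∼ P, defining Z̃^Q_t = Q(τ ≥ t | ℱ_t), one has for any ℱ-stopping time T: {Z̃^Q_T = 0} = {Z̃_T = 0} almost surely. -/
open MeasureTheory

lemma condexp_zero_imp_aux
    {Ω : Type*} {m m0 : MeasurableSpace Ω} (hm : m ≤ m0)
    (μ ν : Measure Ω) [IsProbabilityMeasure μ] [IsProbabilityMeasure ν]
    (hμν : μ ≪ ν) (hνμ : ν ≪ μ)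
    (B : Set Ω) (hB : MeasurableSet B) :
    ∀ᵐ ω ∂μ,
      (μ[B.indicator (fun _ => (1 : ℝ)) | m]) ω = 0 →
        (ν[B.indicator (fun _ => (1 : ℝ)) | m]) ω = 0 := by
  set f : Ω → ℝ := B.indicator (fun _ => (1 : ℝ)) with hf
  have hfint : ∀ (ρ : Measure Ω) [IsProbabilityMeasure ρ], Integrable f ρ := by
    intro ρ _
    exact (integrable_const (1 : ℝ)).indicator hB
  set A : Set Ω := {ω | (μ[f | m]) ω = 0} with hA
  have hAm : MeasurableSet[m] A :=
    stronglyMeasurable_condExp.measurable (measurableSet_singleton (0 : ℝ))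
  have hAm0 : MeasurableSet A := hm _ hAm
  -- ∫ over A of f dμ = 0
  have h1 : ∫ x in A, f x ∂μ = 0 := by
    rw [← setIntegral_condExp hm (hfint μ) hAm]
    refine setIntegral_eq_zero_of_forall_eq_zero ?_
    intro x hx
    exact hx
  -- hence μ (A ∩ B) = 0
  have h2 : ∫ x in A, f x ∂μ = (μ (A ∩ B)).toReal := by
    rw [hf, setIntegral_indicator hB, setIntegral_const, smul_eq_mul, mul_one]
    rfl
  have hμAB : μ (A ∩ B) = 0 := by
    have := h1.symm.trans h2
    have hfin : μ (A ∩ B) ≠ ⊤ := measure_ne_top _ _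
    exact (ENNReal.toReal_eq_zero_iff _).mp this.symm |>.resolve_right hfin
  have hνAB : ν (A ∩ B) = 0 := hνμ hμAB
  -- ∫ over A of condexp under ν = 0
  have h3 : ∫ x in A, (ν[f | m]) x ∂ν = 0 := by
    rw [setIntegral_condExp hm (hfint ν) hAm, hf, setIntegral_indicator hB]
    simp [Measure.restrict_eq_zero.mpr hνAB]
  -- nonnegativity of condexp
  have hnn : 0 ≤ᵐ[ν] (ν[f | m]) := by
    refine condExp_nonneg ?_
    filter_upwards with x
    exact Set.indicator_nonneg (fun _ _ => zero_le_one) x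
  have hnnA : 0 ≤ᵐ[ν.restrict A] (ν[f | m]) := ae_restrict_of_ae hnn
  have hintA : Integrable (ν[f | m]) (ν.restrict A) :=
    (integrable_condExp (f := f)).restrict
  have h4 : (ν[f | m]) =ᵐ[ν.restrict A] 0 :=
    (integral_eq_zero_iff_of_nonneg_ae hnnA hintA).mp h3
  have h5 : ∀ᵐ ω ∂ν, ω ∈ A → (ν[f | m]) ω = 0 :=
    ae_imp_of_ae_restrict h4
  have h6 : ∀ᵐ ω ∂μ, ω ∈ A → (ν[f | m]) ω = 0 := hμν.ae_le h5
  filter_upwards [h6] with ω hω hμ0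
  exact hω hμ0

/-- For equivalent probability measures `P ∼ Q`, with `Z̃_T = P(τ ≥ T | ℱ_T)` and
`Z̃^Q_T = Q(τ ≥ T | ℱ_T)`, the events `{Z̃^Q_T = 0}` and `{Z̃_T = 0}` coincide a.s. -/
theorem condexp_zero_set_equiv_measures
    {Ω : Type*} {m m0 : MeasurableSpace Ω} (hm : m ≤ m0)
    (P Q : Measure Ω) [IsProbabilityMeasure P] [IsProbabilityMeasure Q]
    (hPQ : P ≪ Q) (hQP : Q ≪ P)
    (τ T : Ω → ℝ) (hB : MeasurableSet {ω | T ω ≤ τ ω}) :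
    ∀ᵐ ω ∂P,
      ((Q[Set.indicator {ω' | T ω' ≤ τ ω'} (fun _ => (1 : ℝ)) | m]) ω = 0 ↔
        (P[Set.indicator {ω' | T ω' ≤ τ ω'} (fun _ => (1 : ℝ)) | m]) ω = 0) := by
  have h1 := condexp_zero_imp_aux hm P Q hPQ hQP _ hB
  have h2 := hPQ.ae_le (condexp_zero_imp_aux hm Q P hQP hPQ _ hB)
  filter_upwards [h1, h2] with ω hω1 hω2
  exact ⟨hω2, hω1⟩
end

section
/- Let ξ be integrable and ℱ_{T-} ⊆ ℱ a sub-σ-algebra. Suppose Y > 0 is integrable with E[Y|ℱ_{T-}] = 1 and E[Y·ξ·1_A | ℱ_{T-}] = 0 where A ∈ ℱ. Define Y₁ := Y·1_A + 1_{Aᶜ} and Ỹ₁ := Y₁/E[Y₁|ℱ_{T-}] (well-defined since Y₁ > 0). Then Ỹ₁ > 0, E[Ỹ₁|ℱ_{T-}] = 1, and E[Ỹ₁·ξ·1_A|ℱ_{T-}] = 0 almost surely. -/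
open MeasureTheory
open scoped ENNReal

/-- Construction of an equivalent conditional martingale density: with
`Y₁ := Y·1_A + 1_{Aᶜ}` and `Ỹ₁ := Y₁ / E[Y₁|ℱ_{T-}]`, one has `Ỹ₁ > 0`,
`E[Ỹ₁|ℱ_{T-}] = 1`, and `E[Ỹ₁ ξ 1_A | ℱ_{T-}] = 0` a.s. -/
theorem normalized_density_construction
    {Ω : Type*} {m m0 : MeasurableSpace Ω} (hm : m ≤ m0)
    (P : Measure Ω) [IsProbabilityMeasure P]
    (ξ Y : Ω → ℝ) (hξ : Integrable ξ P) (hY : Integrable Y P)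
    (hYpos : ∀ᵐ ω ∂P, 0 < Y ω)
    (A : Set Ω) (hA : MeasurableSet A)
    (hY1 : P[Y | m] =ᵐ[P] fun _ => (1 : ℝ))
    (hYξ : Integrable (fun ω => Y ω * ξ ω * A.indicator (fun _ => (1 : ℝ)) ω) P)
    (h0 : P[fun ω => Y ω * ξ ω * A.indicator (fun _ => (1 : ℝ)) ω | m] =ᵐ[P] 0) :
    (∀ᵐ ω ∂P,
      0 < (Y ω * A.indicator (fun _ => (1 : ℝ)) ω + Aᶜ.indicator (fun _ => (1 : ℝ)) ω) /
        (P[fun ω' => Y ω' * A.indicator (fun _ => (1 : ℝ)) ω' +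
          Aᶜ.indicator (fun _ => (1 : ℝ)) ω' | m]) ω) ∧
    (P[fun ω => (Y ω * A.indicator (fun _ => (1 : ℝ)) ω + Aᶜ.indicator (fun _ => (1 : ℝ)) ω) /
        (P[fun ω' => Y ω' * A.indicator (fun _ => (1 : ℝ)) ω' +
          Aᶜ.indicator (fun _ => (1 : ℝ)) ω' | m]) ω | m] =ᵐ[P] fun _ => (1 : ℝ)) ∧
    (P[fun ω => ((Y ω * A.indicator (fun _ => (1 : ℝ)) ω + Aᶜ.indicator (fun _ => (1 : ℝ)) ω) /
        (P[fun ω' => Y ω' * A.indicator (fun _ => (1 : ℝ)) ω' +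
          Aᶜ.indicator (fun _ => (1 : ℝ)) ω' | m]) ω) * ξ ω * A.indicator (fun _ => (1 : ℝ)) ω
        | m] =ᵐ[P] 0) := by
  set f : Ω → ℝ :=
    fun ω => Y ω * A.indicator (fun _ => (1 : ℝ)) ω + Aᶜ.indicator (fun _ => (1 : ℝ)) ω
    with hf_def
  have h_indY : (fun ω => Y ω * A.indicator (fun _ => (1:ℝ)) ω) = A.indicator Y := by
    funext ω; by_cases h : ω ∈ A <;>
      simp [Set.indicator_of_mem, Set.indicator_of_notMem, h]
  have hf_int : Integrable f P := by
    have : Integrable (fun ω => Y ω * A.indicator (fun _ => (1:ℝ)) ω) P := by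
      rw [h_indY]; exact hY.indicator hA
    exact this.add ((integrable_const (1:ℝ)).indicator hA.compl)
  have hf_pos : ∀ᵐ ω ∂P, 0 < f ω := by
    filter_upwards [hYpos] with ω hω
    by_cases h : ω ∈ A
    · simp [hf_def, Set.indicator_of_mem h, Set.indicator_of_notMem (by simpa using h :
        ω ∉ Aᶜ), hω]
    · simp [hf_def, Set.indicator_of_notMem h, Set.indicator_of_mem (by simpa using h :
        ω ∈ Aᶜ)]
  set g : Ω → ℝ := P[f | m] with hg_def
  have hg_meas : StronglyMeasurable[m] g := stronglyMeasurable_condExp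
  have hg_int : Integrable g P := integrable_condExp
  have hgi_meas : StronglyMeasurable[m] fun ω => (g ω)⁻¹ :=
    (hg_meas.measurable.inv).stronglyMeasurable
  -- positivity of g
  have hs_meas : MeasurableSet[m] {ω | g ω ≤ 0} :=
    hg_meas.measurableSet_le stronglyMeasurable_const
  have hg_pos : ∀ᵐ ω ∂P, 0 < g ω := by
    have h1 : ∫ ω in {ω | g ω ≤ 0}, g ω ∂P = ∫ ω in {ω | g ω ≤ 0}, f ω ∂P :=
      setIntegral_condExp hm hf_int hs_meas
    have h2 : ∫ ω in {ω | g ω ≤ 0}, g ω ∂P ≤ 0 :=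
      setIntegral_nonpos (hm _ hs_meas) fun ω hω => hω
    have h3 : 0 ≤ ∫ ω in {ω | g ω ≤ 0}, f ω ∂P :=
      setIntegral_nonneg_of_ae (hf_pos.mono fun ω h => h.le)
    have h4 : ∫ ω in {ω | g ω ≤ 0}, f ω ∂P = 0 := le_antisymm (h1 ▸ h2) h3
    have h5 : f =ᵐ[P.restrict {ω | g ω ≤ 0}] 0 :=
      (setIntegral_eq_zero_iff_of_nonneg_ae
        (ae_restrict_of_ae (hf_pos.mono fun ω h => h.le)) hf_int.integrableOn).mp h4
    have h6 : ∀ᵐ ω ∂P.restrict {ω | g ω ≤ 0}, False := by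
      filter_upwards [h5, ae_restrict_of_ae hf_pos] with ω h h'
      exact absurd h (by simpa using h'.ne')
    have h7 : P {ω | g ω ≤ 0} = 0 := by
      have := ae_iff.mp h6
      simpa [Measure.restrict_apply_univ] using
        (by simpa using this : P.restrict {ω | g ω ≤ 0} Set.univ = 0)
    filter_upwards [measure_eq_zero_iff_ae_notMem.mp h7] with ω hω
    simpa using hω
  -- integrability of f / g
  have hQ_int : Integrable (fun ω => f ω / g ω) P := by
    set h : ℕ → Ω → ℝ := fun n ω => min (max ((g ω)⁻¹) 0) (n : ℝ) with hh_def
    have hh_meas : ∀ n, StronglyMeasurable[m] (h n) := fun n =>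
      (((hg_meas.measurable.inv).max measurable_const).min measurable_const).stronglyMeasurable
    have hh_bd : ∀ n, ∀ ω, ‖h n ω‖ ≤ (n : ℝ) := by
      intro n ω
      rw [Real.norm_eq_abs, abs_of_nonneg (le_min (le_max_right _ _) (Nat.cast_nonneg n))]
      exact min_le_right _ _
    have hh_nonneg : ∀ n ω, 0 ≤ h n ω := fun n ω =>
      le_min (le_max_right _ _) (Nat.cast_nonneg n)
    have hn_int : ∀ n, Integrable (fun ω => h n ω * f ω) P := fun n =>
      hf_int.bdd_mul ((hh_meas n).mono hm).aestronglyMeasurable (ae_of_all _ (hh_bd n))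
    have hng_int : ∀ n, Integrable (fun ω => h n ω * g ω) P := fun n =>
      hg_int.bdd_mul ((hh_meas n).mono hm).aestronglyMeasurable (ae_of_all _ (hh_bd n))
    have hce : ∀ n, P[fun ω => h n ω * f ω | m] =ᵐ[P] fun ω => h n ω * g ω := by
      intro n
      have := condExp_mul_of_stronglyMeasurable_left (μ := P) (hh_meas n)
        (by exact hn_int n) hf_int
      exact this.trans (Filter.EventuallyEq.of_eq (by rw [← hg_def]; rfl))
    have hint_le : ∀ n, ∫ ω, h n ω * f ω ∂P ≤ 1 := by
      intro n
      rw [← integral_condExp hm]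
      calc ∫ ω, (P[fun ω => h n ω * f ω | m]) ω ∂P = ∫ ω, h n ω * g ω ∂P :=
            integral_congr_ae (hce n)
        _ ≤ ∫ _ω, (1:ℝ) ∂P := by
            refine integral_mono_ae (hng_int n) (integrable_const 1) ?_
            filter_upwards [hg_pos] with ω hω
            calc h n ω * g ω ≤ (g ω)⁻¹ * g ω := by
                  refine mul_le_mul_of_nonneg_right ?_ hω.le
                  exact le_trans (min_le_left _ _) (max_le le_rfl (inv_nonneg.mpr hω.le))
              _ = 1 := inv_mul_cancel₀ hω.ne'
        _ = 1 := by simp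
    set F : ℕ → Ω → ℝ≥0∞ := fun n ω => ENNReal.ofReal (h n ω * f ω) with hF_def
    have hF_meas : ∀ n, AEMeasurable (F n) P := fun n =>
      ((((hh_meas n).mono hm).measurable).aemeasurable.mul
        hf_int.1.aemeasurable).ennreal_ofReal
    have hF_mono : ∀ᵐ ω ∂P, Monotone fun n => F n ω := by
      filter_upwards [hf_pos] with ω hω n k hnk
      exact ENNReal.ofReal_le_ofReal (mul_le_mul_of_nonneg_right
        (min_le_min le_rfl (Nat.cast_le.mpr hnk)) hω.le)
    have hF_sup : ∀ᵐ ω ∂P, (⨆ n, F n ω) = ENNReal.ofReal (f ω / g ω) := by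
      filter_upwards [hf_pos, hg_pos] with ω hfω hgω
      have hmax : max ((g ω)⁻¹) 0 = (g ω)⁻¹ := max_eq_left (inv_nonneg.mpr hgω.le)
      refine le_antisymm (iSup_le fun n => ?_) ?_
      · refine ENNReal.ofReal_le_ofReal ?_
        rw [div_eq_inv_mul]
        exact mul_le_mul_of_nonneg_right (le_trans (min_le_left _ _) hmax.le) hfω.le
      · obtain ⟨n, hn⟩ := exists_nat_ge ((g ω)⁻¹)
        refine le_iSup_of_le n (le_of_eq ?_)
        rw [hF_def]
        congr 1
        rw [div_eq_inv_mul]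
        congr 1
        show (g ω)⁻¹ = ((g ω)⁻¹ ⊔ 0) ⊓ (n : ℝ)
        rw [hmax, min_eq_left hn]
    have hlint : ∫⁻ ω, ENNReal.ofReal (f ω / g ω) ∂P ≤ 1 := by
      rw [← lintegral_congr_ae hF_sup, lintegral_iSup' hF_meas hF_mono]
      refine iSup_le fun n => ?_
      have hnn : 0 ≤ᵐ[P] fun ω => h n ω * f ω := by
        filter_upwards [hf_pos] with ω hω
        exact mul_nonneg (hh_nonneg n ω) hω.le
      rw [hF_def, ← ofReal_integral_eq_lintegral_ofReal (hn_int n) hnn]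
      exact le_trans (ENNReal.ofReal_le_ofReal (hint_le n)) (by simp)
    refine ⟨(hf_int.1.aemeasurable.div
      ((hg_meas.mono hm).measurable.aemeasurable)).aestronglyMeasurable, ?_⟩
    rw [hasFiniteIntegral_iff_norm]
    refine lt_of_le_of_lt (le_trans (le_of_eq (lintegral_congr_ae ?_)) hlint) (by simp)
    filter_upwards [hf_pos, hg_pos] with ω hfω hgω
    rw [Real.norm_eq_abs, abs_of_nonneg (div_nonneg hfω.le hgω.le)]
  refine ⟨?_, ?_, ?_⟩
  · filter_upwards [hf_pos, hg_pos] with ω hfω hgω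
    exact div_pos hfω hgω
  · have heq : (fun ω => f ω / g ω) = (fun ω => (g ω)⁻¹) * f := by
      funext ω; simp [div_eq_inv_mul]
    rw [heq]
    refine (condExp_mul_of_stronglyMeasurable_left hgi_meas (by rw [← heq]; exact hQ_int)
      hf_int).trans ?_
    filter_upwards [hg_pos] with ω hω
    show (g ω)⁻¹ * (P[f|m]) ω = 1
    rw [← hg_def]
    exact inv_mul_cancel₀ hω.ne'
  · have hpt : (fun ω => (f ω / g ω) * ξ ω * A.indicator (fun _ => (1:ℝ)) ω)
        = (fun ω => (g ω)⁻¹) * (fun ω => Y ω * ξ ω * A.indicator (fun _ => (1:ℝ)) ω) := by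
      funext ω
      by_cases hω : ω ∈ A
      · have h1 : A.indicator (fun _ => (1:ℝ)) ω = 1 := Set.indicator_of_mem hω _
        have h2 : Aᶜ.indicator (fun _ => (1:ℝ)) ω = 0 :=
          Set.indicator_of_notMem (by simpa using hω) _
        simp only [hf_def, Pi.mul_apply, h1, h2, mul_one, add_zero, div_eq_inv_mul]
        ring
      · have h1 : A.indicator (fun _ => (1:ℝ)) ω = 0 := Set.indicator_of_notMem hω _
        simp [h1]
    rw [hpt]
    by_cases hint : Integrable
        ((fun ω => (g ω)⁻¹) * fun ω => Y ω * ξ ω * A.indicator (fun _ => (1:ℝ)) ω) P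
    · refine (condExp_mul_of_stronglyMeasurable_left hgi_meas hint hYξ).trans ?_
      filter_upwards [h0] with ω hω
      show (g ω)⁻¹ * (P[fun ω => Y ω * ξ ω * A.indicator (fun _ => (1:ℝ)) ω|m]) ω = 0
      rw [hω]; simp
    · rw [condExp_of_not_integrable hint]
end
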